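/- Let (X, d) be a compact metric space, let H be a real Hilbert space, and let Φ : X → H be continuous. For a finite signed Borel measure ν on X with Jordan decomposition ν = ν⁺ − ν⁻, write L(ν) := ∫ Φ dν⁺ − ∫ Φ dν⁻ (Bochner integrals) and ‖ν‖_TV := ν⁺(X) + ν⁻(X). Let t₁, …, tₛ ∈ X be distinct points, a₁, …, aₛ nonzero reals, and μ⁰ := Σ_{k=1}^{s} aₖ·δ_{tₖ}. Let r > 0 be such that the closed balls B̄(tₖ, r) are pairwise disjoint, let ε₂ > 0, let c ∈ H, and set η(x) := ⟨c, Φ(x)⟩. Assume: η(tₖ) = sign(aₖ) for every k; |η(x)| ≤ 1 − ε₂·d(x, tₖ)² for every k and x ∈ B̄(tₖ, r); and |η(x)| ≤ 1 − ε₂·r² for every x in F_r := X \ ⋃ₖ B̄(tₖ, r). Let y ∈ H, κ > 0, γ := ‖y − L(μ⁰)‖, and let μ be a finite signed Borel measure on X with (1/2)·‖y − L(μ)‖² + κ·‖μ‖_TV ≤ (1/2)·γ² + κ·‖μ⁰‖_TV. Then |μ|(F_r) ≤ (γ + κ·‖c‖)² / (2κ·ε₂·r²), where |μ| = μ⁺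 + μ⁻. -/

import Mathlib

open MeasureTheory Metric RealInnerProductSpace
open scoped ENNReal NNReal

/-- Forward operator on finite signed measures: `L ν = ∫ Φ dν⁺ - ∫ Φ dν⁻`
(Bochner integrals with respect to the Jordan decomposition). -/
noncomputable def forwardOp {X H : Type*} [MeasurableSpace X]
    [NormedAddCommGroup H] [NormedSpace ℝ H]
    (ν : SignedMeasure X) (Φ : X → H) : H :=
  (∫ x, Φ x ∂ν.toJordanDecomposition.posPart) -
    ∫ x, Φ x ∂ν.toJordanDecomposition.negPart

/-- Total variation norm of a finite signed measure: `‖ν‖_TV = ν⁺(X) + ν⁻(X)`. -/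
noncomputable def tvNorm {X : Type*} [MeasurableSpace X] (ν : SignedMeasure X) : ℝ :=
  (ν.toJordanDecomposition.posPart Set.univ).toReal +
    (ν.toJordanDecomposition.negPart Set.univ).toReal

/-! ### Auxiliary lemmas -/

lemma aux_mul_sign (a : ℝ) : a * Real.sign a = |a| := by
  rcases lt_trichotomy a 0 with h | h | h
  · rw [Real.sign_of_neg h, abs_of_neg h]; ring
  · simp [h]
  · rw [Real.sign_of_pos h, abs_of_pos h]; ring

section Aux

variable {X : Type*} [MeasurableSpace X]

lemma aux_finiteSum_isFiniteMeasure {ι : Type*} (s : Finset ι) (m : ι → Measure X)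
    (h : ∀ i ∈ s, IsFiniteMeasure (m i)) : IsFiniteMeasure (∑ i ∈ s, m i) := by
  constructor
  rw [Measure.finset_sum_apply]
  refine ENNReal.sum_lt_top.2 fun i hi => ?_
  have := h i hi
  exact measure_lt_top _ _

/-- If `ν = p - n` then `ν⁺ + n = ν⁻ + p`. -/
lemma aux_jordan_add_eq (p n : Measure X) [IsFiniteMeasure p] [IsFiniteMeasure n]
    (ν : SignedMeasure X) (h : ν = p.toSignedMeasure - n.toSignedMeasure) :
    ν.toJordanDecomposition.posPart + n = ν.toJordanDecomposition.negPart + p := by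
  ext i hi
  have h1 : ν i = (ν.toJordanDecomposition.posPart i).toReal
      - (ν.toJordanDecomposition.negPart i).toReal := by
    conv_lhs => rw [← ν.toSignedMeasure_toJordanDecomposition]
    rw [JordanDecomposition.toSignedMeasure, VectorMeasure.sub_apply,
      Measure.toSignedMeasure_apply_measurable hi, Measure.toSignedMeasure_apply_measurable hi]
    rfl
  have h2 : ν i = (p i).toReal - (n i).toReal := by
    rw [h, VectorMeasure.sub_apply, Measure.toSignedMeasure_apply_measurable hi,
      Measure.toSignedMeasure_apply_measurable hi]
    rfl
  rw [Measure.add_apply, Measure.add_apply]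
  have hfin : ∀ m : Measure X, IsFiniteMeasure m → m i ≠ ⊤ := fun m hm => measure_ne_top m i
  rw [← ENNReal.toReal_eq_toReal_iff' (by finiteness) (by finiteness)]
  rw [ENNReal.toReal_add (by finiteness) (by finiteness),
    ENNReal.toReal_add (by finiteness) (by finiteness)]
  linarith

lemma aux_integral_jordan {E : Type*} [NormedAddCommGroup E] [NormedSpace ℝ E]
    (p n : Measure X) [IsFiniteMeasure p] [IsFiniteMeasure n]
    (ν : SignedMeasure X) (h : ν = p.toSignedMeasure - n.toSignedMeasure)
    (f : X → E) (hf : ∀ (m : Measure X), IsFiniteMeasure m → Integrable f m) :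
    (∫ x, f x ∂ν.toJordanDecomposition.posPart) - ∫ x, f x ∂ν.toJordanDecomposition.negPart
      = (∫ x, f x ∂p) - ∫ x, f x ∂n := by
  have key := aux_jordan_add_eq p n ν h
  have h1 : ∫ x, f x ∂(ν.toJordanDecomposition.posPart + n)
      = ∫ x, f x ∂(ν.toJordanDecomposition.negPart + p) := by rw [key]
  rw [integral_add_measure (hf ν.toJordanDecomposition.posPart inferInstance)
      (hf n inferInstance),
    integral_add_measure (hf ν.toJordanDecomposition.negPart inferInstance)
      (hf p inferInstance)] at h1
  rw [sub_eq_sub_iff_add_eq_add]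
  rw [h1]; abel

lemma aux_tvNorm_le (p n : Measure X) [IsFiniteMeasure p] [IsFiniteMeasure n]
    (ν : SignedMeasure X) (h : ν = p.toSignedMeasure - n.toSignedMeasure) :
    tvNorm ν ≤ (p Set.univ).toReal + (n Set.univ).toReal := by
  have key := aux_jordan_add_eq p n ν h
  obtain ⟨u, hu, hpos, hneg⟩ := ν.toJordanDecomposition.mutuallySingular
  set P := ν.toJordanDecomposition.posPart
  set N := ν.toJordanDecomposition.negPart
  have happ : ∀ i : Set X, P i + n i = N i + p i := by
    intro i
    have := congrArg (fun m : Measure X => m i) key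
    simpa [Measure.add_apply] using this
  have hP : P Set.univ ≤ p Set.univ := by
    have h1 : P Set.univ ≤ P u + P uᶜ := by
      rw [← measure_union (disjoint_compl_right) hu.compl]
      simp
    have h2 : P uᶜ + n uᶜ = N uᶜ + p uᶜ := happ uᶜ
    rw [hneg, zero_add] at h2
    calc P Set.univ ≤ P u + P uᶜ := h1
      _ = P uᶜ := by rw [hpos, zero_add]
      _ ≤ P uᶜ + n uᶜ := le_self_add
      _ = p uᶜ := h2
      _ ≤ p Set.univ := measure_mono (Set.subset_univ _)
  have hN : N Set.univ ≤ n Set.univ := by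
    have h1 : N Set.univ ≤ N uᶜ + N u := by
      rw [← measure_union (disjoint_compl_left) hu]
      simp
    have h2 : P u + n u = N u + p u := happ u
    rw [hpos, zero_add] at h2
    calc N Set.univ ≤ N uᶜ + N u := h1
      _ = N u := by rw [hneg, zero_add]
      _ ≤ N u + p u := le_self_add
      _ = n u := h2.symm
      _ ≤ n Set.univ := measure_mono (Set.subset_univ _)
  have := ENNReal.toReal_mono (measure_ne_top p _) hP
  have := ENNReal.toReal_mono (measure_ne_top n _) hN
  unfold tvNorm
  linarith


lemma aux_smul_dirac_finite (b : ℝ) (x : X) :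
    IsFiniteMeasure ((b.toNNReal : ℝ≥0∞) • Measure.dirac x) := by
  constructor
  simp [ENNReal.mul_lt_top, ENNReal.coe_lt_top]

lemma aux_coe_toNNReal (b : ℝ) : ((b.toNNReal : ℝ≥0∞)).toReal = max b 0 := by
  simp [Real.coe_toNNReal']

lemma aux_pos_sub_neg (b : ℝ) : (b.toNNReal : ℝ) - ((-b).toNNReal : ℝ) = b := by
  rw [Real.coe_toNNReal', Real.coe_toNNReal']
  rcases le_total b 0 with h | h
  · rw [max_eq_right h, max_eq_left (by linarith)]; ring
  · rw [max_eq_left h, max_eq_right (by linarith)]; ring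

lemma aux_pos_add_neg (b : ℝ) : max b 0 + max (-b) 0 = |b| := by
  rcases le_total b 0 with h | h
  · rw [max_eq_right h, max_eq_left (by linarith), abs_of_nonpos h]; ring
  · rw [max_eq_left h, max_eq_right (by linarith), abs_of_nonneg h]; ring

/-- Decomposition of a finite combination of Dirac masses. -/
lemma aux_mu0_eq {s : ℕ} (t : Fin s → X) (a : Fin s → ℝ) :
    (∑ k, a k • (Measure.dirac (t k)).toSignedMeasure)
      = @Measure.toSignedMeasure X _ (∑ k, ((a k).toNNReal : ℝ≥0∞) • Measure.dirac (t k))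
          (aux_finiteSum_isFiniteMeasure _ _ (fun k _ => aux_smul_dirac_finite (a k) (t k)))
        - @Measure.toSignedMeasure X _ (∑ k, (((-a k)).toNNReal : ℝ≥0∞) • Measure.dirac (t k))
          (aux_finiteSum_isFiniteMeasure _ _ (fun k _ => aux_smul_dirac_finite (-(a k)) (t k))) := by
  haveI := aux_finiteSum_isFiniteMeasure Finset.univ
    (fun k => ((a k).toNNReal : ℝ≥0∞) • Measure.dirac (t k))
    (fun k _ => aux_smul_dirac_finite (a k) (t k))
  haveI := aux_finiteSum_isFiniteMeasure Finset.univ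
    (fun k => (((-a k)).toNNReal : ℝ≥0∞) • Measure.dirac (t k))
    (fun k _ => aux_smul_dirac_finite (-(a k)) (t k))
  ext i hi
  rw [VectorMeasure.sub_apply, Measure.toSignedMeasure_apply_measurable hi,
    Measure.toSignedMeasure_apply_measurable hi]
  have hps : (∑ k, ((a k).toNNReal : ℝ≥0∞) • Measure.dirac (t k)) i
      = ∑ k, ((a k).toNNReal : ℝ≥0∞) * Measure.dirac (t k) i := by
    simp [Measure.finset_sum_apply, Measure.smul_apply, smul_eq_mul]
  have hns : (∑ k, (((-a k)).toNNReal : ℝ≥0∞) • Measure.dirac (t k)) i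
      = ∑ k, (((-a k)).toNNReal : ℝ≥0∞) * Measure.dirac (t k) i := by
    simp [Measure.finset_sum_apply, Measure.smul_apply, smul_eq_mul]
  have hto : ∀ (b : ℝ) (k : Fin s),
      ((b.toNNReal : ℝ≥0∞) * Measure.dirac (t k) i) ≠ ⊤ := fun b k =>
    ENNReal.mul_ne_top ENNReal.coe_ne_top (measure_ne_top (Measure.dirac (t k)) i)
  rw [Measure.real, Measure.real]
  rw [hps, hns, ENNReal.toReal_sum (fun k _ => hto _ k), ENNReal.toReal_sum (fun k _ => hto _ k)]
  rw [show (∑ l, a l • (Measure.dirac (t l)).toSignedMeasure) i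
      = ∑ l, a l * ((Measure.dirac (t l)).toSignedMeasure i) by
    induction (Finset.univ : Finset (Fin s)) using Finset.induction with
    | empty => simp
    | insert _ _ h ih =>
        rw [Finset.sum_insert h, Finset.sum_insert h, VectorMeasure.add_apply,
          VectorMeasure.smul_apply, ih]
        simp [smul_eq_mul]]
  rw [← Finset.sum_sub_distrib]
  refine Finset.sum_congr rfl fun k _ => ?_
  rw [Measure.toSignedMeasure_apply_measurable hi, Measure.real]
  rw [ENNReal.toReal_mul, ENNReal.toReal_mul, aux_coe_toNNReal, aux_coe_toNNReal]
  rcases le_total (a k) 0 with hak | hak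
  · rw [max_eq_right hak, max_eq_left (by linarith)]; ring
  · rw [max_eq_left hak, max_eq_right (by linarith)]; ring

/-- Integral of a function against the positive combination of Diracs. -/
lemma aux_integral_diracs [MeasurableSingletonClass X] {s : ℕ} (t : Fin s → X) (b : Fin s → ℝ)
    (η : X → ℝ) (hη : ∀ m : Measure X, IsFiniteMeasure m → Integrable η m) :
    (∫ x, η x ∂(∑ k, ((b k).toNNReal : ℝ≥0∞) • Measure.dirac (t k)))
      = ∑ k, ((b k).toNNReal : ℝ) * η (t k) := by
  rw [integral_finset_sum_measure (fun k _ => hη _ (aux_smul_dirac_finite (b k) (t k)))]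
  refine Finset.sum_congr rfl fun k _ => ?_
  rw [integral_smul_measure, integral_dirac]
  simp [smul_eq_mul]

lemma aux_total_mass_diracs {s : ℕ} (t : Fin s → X) (b : Fin s → ℝ) :
    ((∑ k, ((b k).toNNReal : ℝ≥0∞) • Measure.dirac (t k)) Set.univ).toReal
      = ∑ k, max (b k) 0 := by
  rw [Measure.finset_sum_apply]
  have h : ∀ k : Fin s, (((b k).toNNReal : ℝ≥0∞) • Measure.dirac (t k)) Set.univ
      = ((b k).toNNReal : ℝ≥0∞) := by
    intro k
    simp [Measure.smul_apply, smul_eq_mul]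
  rw [Finset.sum_congr rfl fun k _ => h k,
    ENNReal.toReal_sum (fun k _ => ENNReal.coe_ne_top)]
  exact Finset.sum_congr rfl fun k _ => aux_coe_toNNReal (b k)

/-- Lower bound for the integral of a nonnegative function bounded below on a set. -/
lemma aux_setbound (m : Measure X) [IsFiniteMeasure m]
    (g : X → ℝ) (hg : Integrable g m) (F : Set X) (hF : MeasurableSet F) (b : ℝ)
    (h0 : ∀ x, 0 ≤ g x) (hFb : ∀ x ∈ F, b ≤ g x) :
    b * (m F).toReal ≤ ∫ x, g x ∂m := by
  have step1 : b * (m F).toReal ≤ ∫ x in F, g x ∂m := by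
    have hc : (∫ _x in F, b ∂m) = (m F).toReal * b := by
      rw [setIntegral_const]; simp [smul_eq_mul, Measure.real]
    calc b * (m F).toReal = ∫ _x in F, b ∂m := by rw [hc]; ring
      _ ≤ ∫ x in F, g x ∂m :=
        setIntegral_mono_on integrableOn_const
          hg.integrableOn hF (fun x hx => hFb x hx)
  have step2 : (∫ x in F, g x ∂m) ≤ ∫ x, g x ∂m :=
    setIntegral_le_integral hg (Filter.Eventually.of_forall h0)
  linarith

end Aux

lemma aux_cont_integrable {X E : Type*} [TopologicalSpace X] [CompactSpace X]
    [MeasurableSpace X] [OpensMeasurableSpace X] [T2Space X]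
    [NormedAddCommGroup E] {f : X → E} (hf : Continuous f)
    (m : Measure X) [IsFiniteMeasure m] : Integrable f m :=
  hf.integrable_of_hasCompactSupport (isClosed_tsupport f).isCompact

theorem stmt_3 {X H : Type*} [MetricSpace X] [CompactSpace X]
    [MeasurableSpace X] [BorelSpace X]
    [NormedAddCommGroup H] [InnerProductSpace ℝ H] [CompleteSpace H]
    (Φ : X → H) (hΦ : Continuous Φ)
    (s : ℕ) (t : Fin s → X) (ht : Function.Injective t)
    (a : Fin s → ℝ) (ha : ∀ k, a k ≠ 0)
    (μ0 : SignedMeasure X)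
    (hμ0 : μ0 = ∑ k, a k • (Measure.dirac (t k)).toSignedMeasure)
    (r : ℝ) (hr : 0 < r)
    (hdisj : Pairwise fun k l => Disjoint (closedBall (t k) r) (closedBall (t l) r))
    (ε₂ : ℝ) (hε₂ : 0 < ε₂) (c : H)
    (hsign : ∀ k, ⟪c, Φ (t k)⟫ = Real.sign (a k))
    (hnear : ∀ k, ∀ x ∈ closedBall (t k) r, |⟪c, Φ x⟫| ≤ 1 - ε₂ * dist x (t k) ^ 2)
    (hfar : ∀ x ∈ (⋃ k, closedBall (t k) r)ᶜ, |⟪c, Φ x⟫| ≤ 1 - ε₂ * r ^ 2)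
    (y : H) (κ : ℝ) (hκ : 0 < κ) (γ : ℝ) (hγ : γ = ‖y - forwardOp μ0 Φ‖)
    (μ : SignedMeasure X)
    (hopt : (1/2) * ‖y - forwardOp μ Φ‖^2 + κ * tvNorm μ ≤ (1/2) * γ^2 + κ * tvNorm μ0) :
    (μ.totalVariation ((⋃ k, closedBall (t k) r)ᶜ)).toReal ≤
      (γ + κ * ‖c‖)^2 / (2 * κ * ε₂ * r^2) := by
  classical
  set η : X → ℝ := fun x => ⟪c, Φ x⟫ with hη
  have hηc : Continuous η := (continuous_const.inner hΦ)
  have hInt : ∀ (m : Measure X), IsFiniteMeasure m → Integrable Φ m := fun m hm =>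
    haveI := hm; aux_cont_integrable hΦ m
  have hIntη : ∀ (m : Measure X), IsFiniteMeasure m → Integrable η m := fun m hm =>
    haveI := hm; aux_cont_integrable hηc m
  -- the positive and negative parts of μ0
  haveI hpfin : IsFiniteMeasure (∑ k, ((a k).toNNReal : ℝ≥0∞) • Measure.dirac (t k)) :=
    aux_finiteSum_isFiniteMeasure _ _ (fun k _ => aux_smul_dirac_finite (a k) (t k))
  haveI hnfin : IsFiniteMeasure (∑ k, (((-a k)).toNNReal : ℝ≥0∞) • Measure.dirac (t k)) :=
    aux_finiteSum_isFiniteMeasure _ _ (fun k _ => aux_smul_dirac_finite (-(a k)) (t k))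
  set p : Measure X := ∑ k, ((a k).toNNReal : ℝ≥0∞) • Measure.dirac (t k) with hp
  set n : Measure X := ∑ k, (((-a k)).toNNReal : ℝ≥0∞) • Measure.dirac (t k) with hn
  have hμ0pn : μ0 = p.toSignedMeasure - n.toSignedMeasure := by
    rw [hμ0, aux_mu0_eq t a]
  -- dual pairing with forwardOp
  have hpair : ∀ ν : SignedMeasure X, ⟪c, forwardOp ν Φ⟫
      = (∫ x, η x ∂ν.toJordanDecomposition.posPart)
        - ∫ x, η x ∂ν.toJordanDecomposition.negPart := by
    intro ν
    rw [forwardOp, inner_sub_right,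
      ← integral_inner (hInt ν.toJordanDecomposition.posPart inferInstance) c,
      ← integral_inner (hInt ν.toJordanDecomposition.negPart inferInstance) c]
  -- value of the pairing at μ0
  have hμ0pair : ⟪c, forwardOp μ0 Φ⟫ = ∑ k, |a k| := by
    rw [hpair μ0, aux_integral_jordan p n μ0 hμ0pn η hIntη, hp, hn,
      aux_integral_diracs t a η hIntη, aux_integral_diracs t (fun k => -(a k)) η hIntη,
      ← Finset.sum_sub_distrib]
    refine Finset.sum_congr rfl fun k _ => ?_
    have hsk : η (t k) = Real.sign (a k) := hsign k
    rw [hsk, ← sub_mul, aux_pos_sub_neg (a k)]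
    exact aux_mul_sign (a k)
  -- tvNorm μ0 bound
  have hμ0tv : tvNorm μ0 ≤ ∑ k, |a k| := by
    refine le_trans (aux_tvNorm_le p n μ0 hμ0pn) (le_of_eq ?_)
    rw [hp, hn, aux_total_mass_diracs t a, aux_total_mass_diracs t (fun k => -(a k)),
      ← Finset.sum_add_distrib]
    exact Finset.sum_congr rfl fun k _ => aux_pos_add_neg (a k)
  -- global bound |η| ≤ 1
  have hη1 : ∀ x, |η x| ≤ 1 := by
    intro x
    by_cases hx : x ∈ ⋃ k, closedBall (t k) r
    · obtain ⟨_, ⟨k, rfl⟩, hxk⟩ := hx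
      refine le_trans (hnear k x hxk) ?_
      have : 0 ≤ ε₂ * dist x (t k) ^ 2 := mul_nonneg hε₂.le (sq_nonneg _)
      linarith
    · refine le_trans (hfar x hx) ?_
      have : 0 ≤ ε₂ * r ^ 2 := mul_nonneg hε₂.le (sq_nonneg _)
      linarith
  -- the far region
  set F : Set X := (⋃ k, closedBall (t k) r)ᶜ with hF
  have hFmeas : MeasurableSet F :=
    (MeasurableSet.iUnion fun k => measurableSet_closedBall).compl
  set P := μ.toJordanDecomposition.posPart with hP
  set N := μ.toJordanDecomposition.negPart with hN
  -- key lower bound for each Jordan part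
  have hlow : ∀ (m : Measure X) (sgn : ℝ), IsFiniteMeasure m → (sgn = 1 ∨ sgn = -1) →
      ε₂ * r^2 * (m F).toReal ≤ (m Set.univ).toReal - sgn * ∫ x, η x ∂m := by
    intro m sgn hm hsgn
    haveI := hm
    have hg : Integrable (fun x => 1 - sgn * η x) m :=
      (integrable_const 1).sub ((hIntη m hm).const_mul sgn)
    have key := aux_setbound m (fun x => 1 - sgn * η x) hg F hFmeas (ε₂ * r^2)
      (fun x => by
        have h2 := abs_le.1 (hη1 x)
        rcases hsgn with h | h <;> rw [h] <;> linarith [h2.1, h2.2])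
      (fun x hx => by
        have h1 := abs_le.1 (hfar x hx)
        rcases hsgn with h | h <;> rw [h] <;> linarith [h1.1, h1.2])
    have step3 : (∫ x, (1 - sgn * η x) ∂m) = (m Set.univ).toReal - sgn * ∫ x, η x ∂m := by
      rw [integral_sub (integrable_const 1) ((hIntη m hm).const_mul sgn), integral_const,
        integral_const_mul]
      simp [smul_eq_mul, Measure.real]
    rw [step3] at key
    exact key
  have hlowP := hlow P 1 inferInstance (Or.inl rfl)
  have hlowN := hlow N (-1) inferInstance (Or.inr rfl)
  rw [one_mul] at hlowP
  rw [neg_one_mul, sub_neg_eq_add] at hlowN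
  -- total variation on F
  have hTV : (μ.totalVariation F).toReal = (P F).toReal + (N F).toReal := by
    rw [SignedMeasure.totalVariation, Measure.add_apply,
      ENNReal.toReal_add (measure_ne_top _ _) (measure_ne_top _ _)]
  -- main chain
  set R := ‖y - forwardOp μ Φ‖ with hR
  have hPair := hpair μ
  have hcore : ε₂ * r^2 * (μ.totalVariation F).toReal
      ≤ tvNorm μ - ⟪c, forwardOp μ Φ⟫ := by
    rw [hTV, hPair, tvNorm]
    have expand : ε₂ * r^2 * ((P F).toReal + (N F).toReal)
        = ε₂ * r^2 * (P F).toReal + ε₂ * r^2 * (N F).toReal := by ring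
    rw [expand]
    rw [← hP, ← hN]
    linarith [hlowP, hlowN]
  -- inner product bound
  have hbnd : ⟪c, forwardOp μ0 Φ⟫ - ⟪c, forwardOp μ Φ⟫ ≤ ‖c‖ * (γ + R) := by
    rw [← inner_sub_right]
    calc ⟪c, forwardOp μ0 Φ - forwardOp μ Φ⟫
        ≤ ‖c‖ * ‖forwardOp μ0 Φ - forwardOp μ Φ‖ := real_inner_le_norm _ _
      _ ≤ ‖c‖ * (γ + R) := by
          refine mul_le_mul_of_nonneg_left ?_ (norm_nonneg c)
          calc ‖forwardOp μ0 Φ - forwardOp μ Φ‖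
              = ‖(forwardOp μ0 Φ - y) + (y - forwardOp μ Φ)‖ := by
                congr 1; abel
            _ ≤ ‖forwardOp μ0 Φ - y‖ + ‖y - forwardOp μ Φ‖ := norm_add_le _ _
            _ = γ + R := by rw [hγ, hR, norm_sub_rev]
  have hγ0 : 0 ≤ γ := hγ ▸ norm_nonneg _
  have hR0 : 0 ≤ R := norm_nonneg _
  have hc0 : 0 ≤ ‖c‖ := norm_nonneg c
  -- combine
  have hfinal : κ * (ε₂ * r^2 * (μ.totalVariation F).toReal) ≤ (γ + κ * ‖c‖)^2 / 2 := by
    have h1 : κ * (ε₂ * r^2 * (μ.totalVariation F).toReal)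
        ≤ κ * (tvNorm μ - ⟪c, forwardOp μ Φ⟫) :=
      mul_le_mul_of_nonneg_left hcore hκ.le
    have h2 : κ * tvNorm μ0 ≤ κ * ⟪c, forwardOp μ0 Φ⟫ := by
      rw [hμ0pair]
      exact mul_le_mul_of_nonneg_left hμ0tv hκ.le
    have h3 := mul_le_mul_of_nonneg_left hbnd hκ.le
    have h5 : (1/2)*γ^2 - (1/2)*R^2 + κ*(‖c‖*(γ+R)) ≤ (γ + κ*‖c‖)^2/2 := by
      nlinarith [sq_nonneg (R - κ*‖c‖)]
    set T := (μ.totalVariation F).toReal with hT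
    set S := tvNorm μ with hS
    set S0 := tvNorm μ0 with hS0
    set Pm := ⟪c, forwardOp μ Φ⟫ with hPm
    set P0 := ⟪c, forwardOp μ0 Φ⟫ with hP0
    set C := ‖c‖ with hC
    clear_value T S S0 Pm P0 C R
    linarith [h1, hopt, h2, h3, h5]
  have hD : (0:ℝ) < 2 * κ * ε₂ * r^2 := by positivity
  rw [le_div_iff₀ hD]
  set T := (μ.totalVariation F).toReal with hT
  set C := ‖c‖ with hC
  clear_value T C
  linarith [hfinal]
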